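/- Let S be a finite semigroup generated by a finite alphabet A, T^1 = KR_right(S,A)^1, and (𝒞, [0,1]) the Chiswell rooted tree built from the Lyndon–Chiswell length function D. Then the right action of T^1 on 𝒞 given by [k,β]·α = [k,βα] is well-defined (independent of representatives), for each α ∈ T^1 the map [k,β] ↦ [k,βα] is an elliptic map of (𝒞,[0,1]), and the resulting map ε': T^1 → EM(𝒞,[0,1])^op is an injective monoid homomorphism (equivalently, α ↦ ([k,β] ↦ [k,βα]) is an injective monoid anti-homomorphism into EM(𝒞,[0,1])). -/

import Mathlib

open scoped Classical

namespace KRHolonomy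

/-- Green's quasi-order `≤_J` on a monoid: `a ≤_J b` iff `a ∈ M b M`. -/
def leJ {M : Type*} [Monoid M] (a b : M) : Prop := ∃ x y : M, a = x * b * y

/-- `a <_J b` iff `a ≤_J b` and not `b ≤_J a`. -/
def ltJ {M : Type*} [Monoid M] (a b : M) : Prop := leJ a b ∧ ¬ leJ b a

/-- Green's quasi-order `≤_R` on a monoid: `a ≤_R b` iff `a ∈ b M`. -/
def leR {M : Type*} [Monoid M] (a b : M) : Prop := ∃ x : M, a = b * x

/-- `a <_R b` iff `a ≤_R b` and not `b ≤_R a`. -/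
def ltR {M : Type*} [Monoid M] (a b : M) : Prop := leR a b ∧ ¬ leR b a

/-- Green's quasi-order `≤_L` on a monoid: `a ≤_L b` iff `a ∈ M b`. -/
def leL {M : Type*} [Monoid M] (a b : M) : Prop := ∃ x : M, a = x * b

/-- `a <_L b` iff `a ≤_L b` and not `b ≤_L a`. -/
def ltL {M : Type*} [Monoid M] (a b : M) : Prop := leL a b ∧ ¬ leL b a

/-- The Dedekind height function: `height x` is the largest `k` such that there is a chain
`x₀ >_J x₁ >_J ⋯ >_J x_k = x`. -/
noncomputable def height {M : Type*} [Monoid M] (x : M) : ℕ :=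
  sSup {k | ∃ c : ℕ → M, c k = x ∧ ∀ i < k, ltJ (c (i + 1)) (c i)}

variable {A S : Type*} [Semigroup S]

/-- The edge `(s, a, s·θ(a))` of the right Cayley graph of `(S,A)` is a transition edge:
there is no path in the right Cayley graph from `s·θ(a)` back to `s`. -/
def IsTransitionEdge (θ : FreeMonoid A →* WithOne S) (s : WithOne S) (a : A) : Prop :=
  ¬ ∃ w : FreeMonoid A, s * θ (FreeMonoid.of a) * θ w = s

/-- The (ordered) sequence of transition edges along the path of the right Cayley graph
starting at `s` and reading the word `u`; an edge is recorded as a pair (source, label). -/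
noncomputable def transEdgesFrom (θ : FreeMonoid A →* WithOne S) :
    WithOne S → List A → List (WithOne S × A)
  | _, [] => []
  | s, a :: w =>
      (if IsTransitionEdge θ s a then [(s, a)] else []) ++
        transEdgesFrom θ (s * θ (FreeMonoid.of a)) w

/-- The sequence of transition edges of the path starting at `1` reading `u`. -/
noncomputable def transEdges (θ : FreeMonoid A →* WithOne S) (u : FreeMonoid A) :
    List (WithOne S × A) :=
  transEdgesFrom θ 1 (FreeMonoid.toList u)

/-- The congruence (`τ_r`, together with `(1,1)`) defining the right Karnofsky–Rhodes
expansion: two words of `A^*` represent the same element of `KR_right(S,A)¹` iff they are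
both empty or both nonempty, they have the same image in `S¹` and the same sequence of
transition edges. -/
def KRrel (θ : FreeMonoid A →* WithOne S) (u v : FreeMonoid A) : Prop :=
  (u = 1 ∧ v = 1) ∨
    (u ≠ 1 ∧ v ≠ 1 ∧ θ u = θ v ∧ transEdges θ u = transEdges θ v)

/-- Green's quasi-order `≤_J` on `T¹ = KR_right(S,A)¹`, expressed on word representatives:
`u ≤_J v` iff `u = p v q` holds in `T¹` for some `p, q ∈ T¹`. -/
def leJT (θ : FreeMonoid A →* WithOne S) (u v : FreeMonoid A) : Prop :=
  ∃ p q : FreeMonoid A, KRrel θ u (p * v * q)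

/-- `<_J` on `T¹ = KR_right(S,A)¹`, expressed on word representatives. -/
def ltJT (θ : FreeMonoid A →* WithOne S) (u v : FreeMonoid A) : Prop :=
  leJT θ u v ∧ ¬ leJT θ v u

/-- The Dedekind height function on `T¹ = KR_right(S,A)¹`, expressed on word
representatives: the largest `k` such that there is a chain
`t₀ >_J t₁ >_J ⋯ >_J t_k = t` in `T¹`. -/
noncomputable def heightT (θ : FreeMonoid A →* WithOne S) (u : FreeMonoid A) : ℕ :=
  sSup {k | ∃ c : ℕ → FreeMonoid A, KRrel θ (c k) u ∧ ∀ i < k, ltJT θ (c (i + 1)) (c i)}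

/-- `ℓ = 2 · max { h(s) : s ∈ S¹ }`. -/
noncomputable def ell (S : Type*) [Semigroup S] : ℕ :=
  2 * sSup (Set.range fun s : WithOne S => height s)

/-- `ξ(u,v)`: the largest `i` (with `0 ≤ i ≤ m`, `m` the number of transition edges of `u`)
such that the first `i` transition edges of `u` and of `v` agree. -/
noncomputable def xi (θ : FreeMonoid A →* WithOne S) (u v : FreeMonoid A) : ℕ :=
  sSup {i | i ≤ (transEdges θ u).length ∧
    (transEdges θ u).take i = (transEdges θ v).take i}

/-- The endpoint of an edge `(s, a)` of the right Cayley graph, namely `s·θ(a)`. -/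
def edgeEnd (θ : FreeMonoid A →* WithOne S) (e : WithOne S × A) : WithOne S :=
  e.1 * θ (FreeMonoid.of e.2)

/-- The Lyndon–Chiswell length function `D` on `T¹ = KR_right(S,A)¹`, expressed on word
representatives.  With `k = ξ(u,v)` (and indexing the transition edges from `1` as in the
paper, so that `E_k` sits at list index `k-1`):
`D(u,v) = ℓ` if `u = v` in `T¹`; `D(u,v) = 0` if `u ≠ v` in `T¹` and `k = 0`;
`D(u,v) = 2·h(end(E_k))` if `k > 0`, `E_{k+1}` and `E'_{k+1}` both exist and have the same
endpoint; and `D(u,v) = 2·h(end(E_k)) - 1` in all remaining cases. -/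
noncomputable def lcD (θ : FreeMonoid A →* WithOne S) (u v : FreeMonoid A) : ℕ :=
  if KRrel θ u v then ell S
  else if xi θ u v = 0 then 0
  else
    let k := xi θ u v
    let base := (transEdges θ u)[k - 1]?.elim 0 fun e => height (edgeEnd θ e)
    if ∃ e e', (transEdges θ u)[k]? = some e ∧ (transEdges θ v)[k]? = some e' ∧
        edgeEnd θ e = edgeEnd θ e'
    then 2 * base
    else 2 * base - 1

/-- The relation `∼` on `C = {(k,α) : 0 ≤ k ≤ ℓ, α ∈ T¹}`:
`(k,α) ∼ (k',β)` iff `k = k'` and `D(α,β) ≥ k`. -/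
def simRel (θ : FreeMonoid A →* WithOne S)
    (p q : {p : ℕ × FreeMonoid A // p.1 ≤ ell S}) : Prop :=
  p.val.1 = q.val.1 ∧ lcD θ p.val.2 q.val.2 ≥ p.val.1

/-- The vertex set of the Chiswell tree: `∼`-classes `[k,α]`. -/
def CVert (θ : FreeMonoid A →* WithOne S) : Type _ := Quot (simRel θ)

/-- The edge relation of the Chiswell graph: the edges are `[k,α] — [k+1,α]`
for `0 ≤ k < ℓ` and `α ∈ T¹`. -/
def edgeRel (θ : FreeMonoid A →* WithOne S) (v w : CVert θ) : Prop :=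
  ∃ (k : ℕ) (α : FreeMonoid A) (hk : k + 1 ≤ ell S),
    v = Quot.mk (simRel θ) ⟨(k, α), Nat.le_of_succ_le hk⟩ ∧
    w = Quot.mk (simRel θ) ⟨(k + 1, α), hk⟩

/-- The Chiswell graph `𝒞`. -/
def CGraph (θ : FreeMonoid A →* WithOne S) : SimpleGraph (CVert θ) :=
  SimpleGraph.fromRel (edgeRel θ)

/-- The depth function of the Chiswell tree: `δ([k,α]) = k`. -/
def depth (θ : FreeMonoid A →* WithOne S) : CVert θ → ℕ :=
  Quot.lift (fun p => p.val.1) (fun _ _ h => h.1)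


section MyAuxLemmas

section MonoidAux

variable {M : Type*} [Monoid M]

lemma leJ_refl (a : M) : leJ a a := ⟨1, 1, by simp⟩

lemma leJ_trans {a b c : M} (h1 : leJ a b) (h2 : leJ b c) : leJ a c := by
  obtain ⟨x, y, rfl⟩ := h1
  obtain ⟨x', y', rfl⟩ := h2
  exact ⟨x * x', y' * y, by simp only [mul_assoc]⟩

lemma ltJ_trans {a b c : M} (h1 : ltJ a b) (h2 : ltJ b c) : ltJ a c :=
  ⟨leJ_trans h1.1 h2.1, fun h => h2.2 (leJ_trans h h1.1)⟩

lemma ltJ_irrefl (a : M) : ¬ ltJ a a := fun h => h.2 h.1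

lemma leR_trans {a b c : M} (h1 : leR a b) (h2 : leR b c) : leR a c := by
  obtain ⟨x, rfl⟩ := h1
  obtain ⟨y, rfl⟩ := h2
  exact ⟨y * x, by simp only [mul_assoc]⟩

lemma kr_absorb [Finite M] {s x z : M} (h : s = x * s * z) : ∃ m : M, s = s * z * m := by
  have key : ∀ k, s = x ^ k * s * z ^ k := by
    intro k
    induction k with
    | zero => simp
    | succ k ih =>
      calc s = x * s * z := h
      _ = x * (x ^ k * s * z ^ k) * z := by rw [← ih]
      _ = x ^ (k + 1) * s * z ^ (k + 1) := by
          rw [pow_succ' x, pow_succ z]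
          simp only [mul_assoc]
  have main : ∀ i j : ℕ, i < j → z ^ i = z ^ j → ∃ m : M, s = s * z * m := by
    intro i j hij hzeq
    obtain ⟨d, rfl⟩ : ∃ d, j = i + (d + 1) := ⟨j - i - 1, by omega⟩
    have hs : s = s * z ^ (d + 1) := by
      calc s = x ^ i * s * z ^ i := key i
      _ = x ^ i * s * z ^ (i + (d + 1)) := by rw [← hzeq]
      _ = x ^ i * s * (z ^ i * z ^ (d + 1)) := by rw [pow_add]
      _ = (x ^ i * s * z ^ i) * z ^ (d + 1) := by simp only [mul_assoc]
      _ = s * z ^ (d + 1) := by rw [← key i]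
    refine ⟨z ^ d, ?_⟩
    conv_lhs => rw [hs]
    rw [pow_succ' z, ← mul_assoc]
  obtain ⟨i, j, hne, hz⟩ := Finite.exists_ne_map_eq_of_infinite (fun n : ℕ => z ^ n)
  rcases Nat.lt_or_gt_of_ne hne with hij | hij
  · exact main i j hij hz
  · exact main j i hij hz.symm

lemma chainlen_lt_card [Finite M] {x : M} {k : ℕ}
    (hk : ∃ c : ℕ → M, c k = x ∧ ∀ i < k, ltJ (c (i + 1)) (c i)) : k < Nat.card M := by
  obtain ⟨c, hck, hc⟩ := hk
  have hmono : ∀ i j : ℕ, i < j → j ≤ k → ltJ (c j) (c i) := by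
    intro i j
    induction j with
    | zero => omega
    | succ j ih =>
      intro hij hjk
      rcases Nat.lt_or_ge i j with h | h
      · exact ltJ_trans (hc j (by omega)) (ih h (by omega))
      · have hij' : i = j := by omega
        subst hij'
        exact hc i (by omega)
  have hinj : Function.Injective (fun n : Fin (k + 1) => c n) := by
    intro a b hab
    by_contra hne
    have hab' : c a = c b := hab
    rcases lt_or_gt_of_ne hne with hlt | hlt
    · have := hmono a b hlt (by omega)
      rw [hab'] at this
      exact ltJ_irrefl _ this
    · have := hmono b a hlt (by omega)
      rw [hab'] at this
      exact ltJ_irrefl _ this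
  have := Nat.card_le_card_of_injective _ hinj
  simpa using this

lemma heightSet_bddAbove [Finite M] (x : M) :
    BddAbove {k | ∃ c : ℕ → M, c k = x ∧ ∀ i < k, ltJ (c (i + 1)) (c i)} :=
  ⟨Nat.card M, fun _ hk => (chainlen_lt_card hk).le⟩

lemma height_mem [Finite M] (x : M) :
    ∃ c : ℕ → M, c (height x) = x ∧ ∀ i < height x, ltJ (c (i + 1)) (c i) := by
  have hne : Set.Nonempty {k | ∃ c : ℕ → M, c k = x ∧ ∀ i < k, ltJ (c (i + 1)) (c i)} :=
    ⟨0, ⟨fun _ => x, rfl, fun i hi => absurd hi (Nat.not_lt_zero i)⟩⟩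
  exact Nat.sSup_mem hne (heightSet_bddAbove x)

lemma height_lt_of_ltJ [Finite M] {x y : M} (h : ltJ x y) : height y < height x := by
  obtain ⟨c, hck, hc⟩ := height_mem y
  have hmem : height y + 1 ∈
      {k | ∃ c : ℕ → M, c k = x ∧ ∀ i < k, ltJ (c (i + 1)) (c i)} := by
    refine ⟨fun i => if i ≤ height y then c i else x, ?_, ?_⟩
    · show (if height y + 1 ≤ height y then c (height y + 1) else x) = x
      rw [if_neg (by omega)]
    · intro i hi
      show ltJ (if i + 1 ≤ height y then c (i + 1) else x) (if i ≤ height y then c i else x)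
      rcases Nat.lt_or_ge i (height y) with h' | h'
      · rw [if_pos (by omega : i + 1 ≤ height y), if_pos (by omega : i ≤ height y)]
        exact hc i h'
      · have hieq : i = height y := by omega
        subst hieq
        rw [if_neg (by omega), if_pos le_rfl, hck]
        exact h
  have hle : height y + 1 ≤ height x := le_csSup (heightSet_bddAbove x) hmem
  omega

lemma height_le_sSup [Finite M] (x : M) :
    height x ≤ sSup (Set.range (height : M → ℕ)) := by
  have hbdd : BddAbove (Set.range (height : M → ℕ)) := by
    refine ⟨Nat.card M, ?_⟩
    intro a ha
    obtain ⟨y, hy⟩ := ha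
    rw [← hy]
    exact (chainlen_lt_card (height_mem y)).le
  exact le_csSup hbdd (Set.mem_range_self x)

end MonoidAux

variable {θ : FreeMonoid A →* WithOne S}

lemma finite_withOne {S : Type*} [Finite S] : Finite (WithOne S) := by
  have := Fintype.ofFinite S
  exact inferInstanceAs (Finite (Option S))

variable {θ : FreeMonoid A →* WithOne S}

lemma transition_ltJ [Finite S] (hsur : Function.Surjective θ) {t c : WithOne S} {a : A}
    (hle : leR t c) (ht : IsTransitionEdge θ t a) :
    ltJ (t * θ (FreeMonoid.of a)) c := by
  haveI : Finite (WithOne S) := finite_withOne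
  obtain ⟨p, rfl⟩ := hle
  refine ⟨⟨1, p * θ (FreeMonoid.of a), by simp [mul_assoc]⟩, ?_⟩
  rintro ⟨x, y, hxy⟩
  have h : c * p = x * (c * p) * (θ (FreeMonoid.of a) * y * p) := by
    conv_lhs => rw [hxy]
    simp only [mul_assoc]
  obtain ⟨m, hm⟩ := kr_absorb h
  obtain ⟨w, hw⟩ := hsur (y * (p * m))
  refine ht ⟨w, ?_⟩
  rw [hw]
  conv_rhs => rw [hm]
  simp only [mul_assoc]

lemma mem_transEdgesFrom : ∀ {w : List A} {s : WithOne S} {e : WithOne S × A},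
    e ∈ transEdgesFrom θ s w → IsTransitionEdge θ e.1 e.2 ∧ leR e.1 s := by
  intro w
  induction w with
  | nil => intro s e he; simp [transEdgesFrom] at he
  | cons a w ih =>
    intro s e he
    rw [transEdgesFrom] at he
    rcases List.mem_append.mp he with h | h
    · by_cases ht : IsTransitionEdge θ s a
      · rw [if_pos ht] at h
        simp only [List.mem_singleton] at h
        subst h
        exact ⟨ht, 1, (mul_one s).symm⟩
      · rw [if_neg ht] at h
        simp at h
    · obtain ⟨h1, h2⟩ := ih h
      exact ⟨h1, leR_trans h2 ⟨θ (FreeMonoid.of a), rfl⟩⟩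

lemma tef_succ : ∀ (w : List A) (s : WithOne S) (i : ℕ) (e e' : WithOne S × A),
    (transEdgesFrom θ s w)[i]? = some e → (transEdgesFrom θ s w)[i + 1]? = some e' →
    leR e'.1 (edgeEnd θ e) := by
  intro w
  induction w with
  | nil => intro s i e e' h _; simp [transEdgesFrom] at h
  | cons a w ih =>
    intro s i e e' h h'
    by_cases ht : IsTransitionEdge θ s a
    · rw [transEdgesFrom, if_pos ht, List.singleton_append] at h h'
      cases i with
      | zero =>
        rw [List.getElem?_cons_zero] at h
        rw [List.getElem?_cons_succ] at h'
        obtain rfl : (s, a) = e := Option.some.inj h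
        exact (mem_transEdgesFrom (List.mem_of_getElem? h')).2
      | succ i =>
        rw [List.getElem?_cons_succ] at h h'
        exact ih _ i e e' h h'
    · rw [transEdgesFrom, if_neg ht, List.nil_append] at h h'
      exact ih _ i e e' h h'

lemma tef_ltJ_chain [Finite S] (hsur : Function.Surjective θ) (w : List A) (s : WithOne S) :
    ∀ (j i : ℕ) (e e' : WithOne S × A), i < j →
      (transEdgesFrom θ s w)[i]? = some e → (transEdgesFrom θ s w)[j]? = some e' →
      ltJ (edgeEnd θ e') (edgeEnd θ e) := by
  haveI : Finite (WithOne S) := finite_withOne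
  intro j
  induction j with
  | zero => intro i e e' hij; omega
  | succ j ih =>
    intro i e e' hij h h'
    have hstep : ∀ f, (transEdgesFrom θ s w)[j]? = some f →
        ltJ (edgeEnd θ e') (edgeEnd θ f) := by
      intro f hf
      have h1 := tef_succ w s j f e' hf h'
      have h2 := (mem_transEdgesFrom (List.mem_of_getElem? h')).1
      exact transition_ltJ hsur h1 h2
    rcases Nat.lt_or_ge i j with hlt | hge
    · have hjlen : j < (transEdgesFrom θ s w).length := by
        have := (List.getElem?_eq_some_iff.mp h').1
        omega
      obtain ⟨f, hf⟩ : ∃ f, (transEdgesFrom θ s w)[j]? = some f :=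
        ⟨_, List.getElem?_eq_getElem hjlen⟩
      exact ltJ_trans (hstep f hf) (ih i e f hlt h hf)
    · have : i = j := by omega
      subst this
      exact hstep e h

lemma tef_append : ∀ (w₁ w₂ : List A) (s : WithOne S),
    transEdgesFrom θ s (w₁ ++ w₂) =
      transEdgesFrom θ s w₁ ++ transEdgesFrom θ (s * θ (FreeMonoid.ofList w₁)) w₂ := by
  intro w₁
  induction w₁ with
  | nil =>
    intro w₂ s
    simp [transEdgesFrom, show (FreeMonoid.ofList ([] : List A)) = 1 from rfl]
  | cons a w₁ ih =>
    intro w₂ s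
    rw [List.cons_append, transEdgesFrom, transEdgesFrom, ih, List.append_assoc]
    have hs : s * θ (FreeMonoid.ofList (a :: w₁)) =
        s * θ (FreeMonoid.of a) * θ (FreeMonoid.ofList w₁) := by
      rw [show (FreeMonoid.ofList (a :: w₁)) = FreeMonoid.of a * FreeMonoid.ofList w₁ from rfl,
        map_mul, mul_assoc]
    rw [hs]

lemma transEdges_mul (u v : FreeMonoid A) :
    transEdges θ (u * v) =
      transEdges θ u ++ transEdgesFrom θ (θ u) (FreeMonoid.toList v) := by
  unfold transEdges
  rw [FreeMonoid.toList_mul, tef_append]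
  congr 2
  rw [one_mul, FreeMonoid.ofList_toList]

lemma tef_smul : ∀ (w : List A) (s t : WithOne S),
    transEdgesFrom θ (s * t) w =
      (transEdgesFrom θ t w).flatMap
        (fun e => if IsTransitionEdge θ (s * e.1) e.2 then [(s * e.1, e.2)] else []) := by
  intro w
  induction w with
  | nil => intro s t; simp [transEdgesFrom]
  | cons a w ih =>
    intro s t
    rw [transEdgesFrom, transEdgesFrom, List.flatMap_append]
    congr 1
    · by_cases ht : IsTransitionEdge θ t a
      · rw [if_pos ht]
        simp [List.flatMap_cons]
      · have hnt : ¬ IsTransitionEdge θ (s * t) a := by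
          obtain ⟨w₀, hw₀⟩ := not_not.mp ht
          intro hst
          refine hst ⟨w₀, ?_⟩
          have := congrArg (fun z => s * z) hw₀
          simpa [mul_assoc] using this
        rw [if_neg ht, if_neg hnt]
        simp
    · rw [mul_assoc, ih]

lemma mul_ne_one_left {u v : FreeMonoid A} (hu : u ≠ 1) : u * v ≠ 1 := by
  intro h
  apply hu
  have h2 := congrArg FreeMonoid.toList h
  rw [FreeMonoid.toList_mul, FreeMonoid.toList_one] at h2
  apply FreeMonoid.toList.injective
  rw [FreeMonoid.toList_one]
  exact (List.append_eq_nil_iff.mp h2).1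

lemma mul_ne_one_right {u v : FreeMonoid A} (hv : v ≠ 1) : u * v ≠ 1 := by
  intro h
  apply hv
  have h2 := congrArg FreeMonoid.toList h
  rw [FreeMonoid.toList_mul, FreeMonoid.toList_one] at h2
  apply FreeMonoid.toList.injective
  rw [FreeMonoid.toList_one]
  exact (List.append_eq_nil_iff.mp h2).2

lemma KRrel_refl (u : FreeMonoid A) : KRrel θ u u := by
  by_cases h : u = 1
  · exact Or.inl ⟨h, h⟩
  · exact Or.inr ⟨h, h, rfl, rfl⟩

lemma KRrel_symm {u v : FreeMonoid A} (h : KRrel θ u v) : KRrel θ v u := by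
  rcases h with ⟨h1, h2⟩ | ⟨h1, h2, h3, h4⟩
  · exact Or.inl ⟨h2, h1⟩
  · exact Or.inr ⟨h2, h1, h3.symm, h4.symm⟩

lemma KRrel_trans {u v w : FreeMonoid A} (h : KRrel θ u v) (h' : KRrel θ v w) :
    KRrel θ u w := by
  rcases h with ⟨h1, h2⟩ | ⟨h1, h2, h3, h4⟩ <;>
    rcases h' with ⟨g1, g2⟩ | ⟨g1, g2, g3, g4⟩
  · exact Or.inl ⟨h1, g2⟩
  · exact absurd h2 (by simpa using g1)
  · exact absurd g1 (by simpa using h2)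
  · exact Or.inr ⟨h1, g2, h3.trans g3, h4.trans g4⟩

lemma KRrel_mul_right (α : FreeMonoid A) {β β' : FreeMonoid A} (h : KRrel θ β β') :
    KRrel θ (β * α) (β' * α) := by
  rcases h with ⟨h1, h2⟩ | ⟨h1, h2, h3, h4⟩
  · subst h1; subst h2; exact KRrel_refl _
  · refine Or.inr ⟨mul_ne_one_left h1, mul_ne_one_left h2, by rw [map_mul, map_mul, h3], ?_⟩
    rw [transEdges_mul, transEdges_mul, h3, h4]

lemma KRrel_mul_left (β : FreeMonoid A) {α α' : FreeMonoid A} (h : KRrel θ α α') :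
    KRrel θ (β * α) (β * α') := by
  rcases h with ⟨h1, h2⟩ | ⟨h1, h2, h3, h4⟩
  · subst h1; subst h2; exact KRrel_refl _
  · refine Or.inr ⟨mul_ne_one_right h1, mul_ne_one_right h2, by rw [map_mul, map_mul, h3], ?_⟩
    rw [transEdges_mul, transEdges_mul]
    congr 1
    have e1 : transEdgesFrom θ (θ β) (FreeMonoid.toList α) =
        transEdgesFrom θ (θ β * 1) (FreeMonoid.toList α) := by rw [mul_one]
    have e2 : transEdgesFrom θ (θ β) (FreeMonoid.toList α') =
        transEdgesFrom θ (θ β * 1) (FreeMonoid.toList α') := by rw [mul_one]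
    rw [e1, e2, tef_smul, tef_smul,
      show transEdgesFrom θ 1 (FreeMonoid.toList α) = transEdges θ α from rfl,
      show transEdgesFrom θ 1 (FreeMonoid.toList α') = transEdges θ α' from rfl, h4]

lemma xi_spec (u v : FreeMonoid A) :
    xi θ u v ≤ (transEdges θ u).length ∧
      (transEdges θ u).take (xi θ u v) = (transEdges θ v).take (xi θ u v) := by
  have hne : Set.Nonempty {i | i ≤ (transEdges θ u).length ∧
      (transEdges θ u).take i = (transEdges θ v).take i} :=
    ⟨0, Nat.zero_le _, by simp⟩
  have hbdd : BddAbove {i | i ≤ (transEdges θ u).length ∧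
      (transEdges θ u).take i = (transEdges θ v).take i} :=
    ⟨(transEdges θ u).length, fun _ hi => hi.1⟩
  exact Nat.sSup_mem hne hbdd

lemma le_xi {u v : FreeMonoid A} {k : ℕ} (h1 : k ≤ (transEdges θ u).length)
    (h2 : (transEdges θ u).take k = (transEdges θ v).take k) : k ≤ xi θ u v := by
  have hbdd : BddAbove {i | i ≤ (transEdges θ u).length ∧
      (transEdges θ u).take i = (transEdges θ v).take i} :=
    ⟨(transEdges θ u).length, fun _ hi => hi.1⟩
  exact le_csSup hbdd ⟨h1, h2⟩

lemma lcD_eq {u v : FreeMonoid A} (hKR : ¬ KRrel θ u v) (hk : xi θ u v ≠ 0) :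
    lcD θ u v =
      if ∃ e e', (transEdges θ u)[xi θ u v]? = some e ∧
          (transEdges θ v)[xi θ u v]? = some e' ∧ edgeEnd θ e = edgeEnd θ e'
      then 2 * ((transEdges θ u)[xi θ u v - 1]?.elim 0 fun e => height (edgeEnd θ e))
      else 2 * ((transEdges θ u)[xi θ u v - 1]?.elim 0 fun e => height (edgeEnd θ e)) - 1 := by
  simp only [lcD]
  rw [if_neg hKR, if_neg hk]

lemma lcD_eq_of_KRrel {u v : FreeMonoid A} (h : KRrel θ u v) : lcD θ u v = ell S := by
  simp only [lcD]
  rw [if_pos h]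

lemma ell_eq : ell S = 2 * sSup (Set.range (height : WithOne S → ℕ)) := rfl

lemma lcD_le_ell [Finite S] (u v : FreeMonoid A) : lcD θ u v ≤ ell S := by
  haveI : Finite (WithOne S) := finite_withOne
  by_cases hKR : KRrel θ u v
  · rw [lcD_eq_of_KRrel hKR]
  · by_cases hk : xi θ u v = 0
    · simp only [lcD]
      rw [if_neg hKR, if_pos hk]
      exact Nat.zero_le _
    · rw [lcD_eq hKR hk, ell_eq]
      cases hget : (transEdges θ u)[xi θ u v - 1]? with
      | none => split_ifs <;> simp
      | some e =>
        have hb := height_le_sSup (edgeEnd θ e)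
        split_ifs <;> simp only [Option.elim_some] <;> omega

lemma KRrel_of_ell_le_lcD [Finite S] (hsur : Function.Surjective θ) {u v : FreeMonoid A}
    (hpos : 0 < ell S) (h : ell S ≤ lcD θ u v) : KRrel θ u v := by
  haveI : Finite (WithOne S) := finite_withOne
  by_contra hKR
  by_cases hk : xi θ u v = 0
  · rw [show lcD θ u v = 0 by simp only [lcD]; rw [if_neg hKR, if_pos hk]] at h
    omega
  · rw [lcD_eq hKR hk] at h
    obtain ⟨hle, htake⟩ := xi_spec (θ := θ) u v
    have hlt : xi θ u v - 1 < (transEdges θ u).length := by omega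
    have hget : (transEdges θ u)[xi θ u v - 1]? =
        some ((transEdges θ u)[xi θ u v - 1]'hlt) := List.getElem?_eq_getElem hlt
    rw [hget] at h
    simp only [Option.elim_some] at h
    have hH := height_le_sSup (edgeEnd θ ((transEdges θ u)[xi θ u v - 1]'hlt))
    rw [ell_eq] at h hpos
    split_ifs at h with hex
    · obtain ⟨e₁, e₁', hg1, hg1', hend⟩ := hex
      have hchain : ltJ (edgeEnd θ e₁) (edgeEnd θ ((transEdges θ u)[xi θ u v - 1]'hlt)) :=
        tef_ltJ_chain hsur (FreeMonoid.toList u) 1 (xi θ u v) (xi θ u v - 1) _ e₁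
          (by omega) hget hg1
      have h2 := height_lt_of_ltJ hchain
      have h3 := height_le_sSup (edgeEnd θ e₁)
      omega
    · omega

lemma lcD_mul [Finite S] (hsur : Function.Surjective θ) (α β β' : FreeMonoid A) :
    lcD θ β β' ≤ lcD θ (β * α) (β' * α) := by
  haveI : Finite (WithOne S) := finite_withOne
  by_cases hKR2 : KRrel θ (β * α) (β' * α)
  · rw [lcD_eq_of_KRrel hKR2]
    exact lcD_le_ell β β'
  · have hKR : ¬ KRrel θ β β' := fun h => hKR2 (KRrel_mul_right α h)
    by_cases hk0 : xi θ β β' = 0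
    · rw [show lcD θ β β' = 0 by simp only [lcD]; rw [if_neg hKR, if_pos hk0]]
      exact Nat.zero_le _
    · obtain ⟨hkle, hktake⟩ := xi_spec (θ := θ) β β'
      have hkle' : xi θ β β' ≤ (transEdges θ β').length := by
        have := congrArg List.length hktake
        simp only [List.length_take] at this
        omega
      have hEmul : transEdges θ (β * α) =
          transEdges θ β ++ transEdgesFrom θ (θ β) (FreeMonoid.toList α) :=
        transEdges_mul β α
      have hEmul' : transEdges θ (β' * α) =
          transEdges θ β' ++ transEdgesFrom θ (θ β') (FreeMonoid.toList α) :=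
        transEdges_mul β' α
      have hk1 : xi θ β β' ≤ xi θ (β * α) (β' * α) := by
        apply le_xi
        · rw [hEmul, List.length_append]
          omega
        · rw [hEmul, hEmul', List.take_append_of_le_length hkle,
            List.take_append_of_le_length hkle', hktake]
      have hk1ne : xi θ (β * α) (β' * α) ≠ 0 := by omega
      rw [lcD_eq hKR hk0, lcD_eq hKR2 hk1ne]
      -- base element of the short list
      have hlt : xi θ β β' - 1 < (transEdges θ β).length := by omega
      have hget : (transEdges θ β)[xi θ β β' - 1]? =
          some ((transEdges θ β)[xi θ β β' - 1]'hlt) := List.getElem?_eq_getElem hlt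
      set e₀ := (transEdges θ β)[xi θ β β' - 1]'hlt with he₀
      have hget0 : (transEdges θ (β * α))[xi θ β β' - 1]? = some e₀ := by
        rw [hEmul, List.getElem?_append_left hlt]
        exact hget
      obtain ⟨hkle1, _⟩ := xi_spec (θ := θ) (β * α) (β' * α)
      rcases Nat.lt_or_ge (xi θ β β') (xi θ (β * α) (β' * α)) with hcase | hcase
      · -- strictly more common transition edges after appending
        have hlt1 : xi θ (β * α) (β' * α) - 1 < (transEdges θ (β * α)).length := by omega
        have hgetf : (transEdges θ (β * α))[xi θ (β * α) (β' * α) - 1]? =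
            some ((transEdges θ (β * α))[xi θ (β * α) (β' * α) - 1]'hlt1) :=
          List.getElem?_eq_getElem hlt1
        set f₀ := (transEdges θ (β * α))[xi θ (β * α) (β' * α) - 1]'hlt1 with hf₀
        have hchain : ltJ (edgeEnd θ f₀) (edgeEnd θ e₀) :=
          tef_ltJ_chain hsur (FreeMonoid.toList (β * α)) 1
            (xi θ (β * α) (β' * α) - 1) (xi θ β β' - 1) e₀ f₀ (by omega) hget0 hgetf
        have hhlt := height_lt_of_ltJ hchain
        rw [hget, hgetf]
        simp only [Option.elim_some]
        split_ifs <;> omega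
      · have heq : xi θ (β * α) (β' * α) = xi θ β β' := by omega
        rw [heq, hget, hget0]
        simp only [Option.elim_some]
        split_ifs with hP hQ hQ
        · exact le_rfl
        · -- hP holds but hQ fails: contradiction
          exfalso
          obtain ⟨e₁, e₁', hg1, hg1', hend⟩ := hP
          apply hQ
          refine ⟨e₁, e₁', ?_, ?_, hend⟩
          · rw [hEmul, List.getElem?_append_left (List.getElem?_eq_some_iff.mp hg1).1]
            exact hg1
          · rw [hEmul', List.getElem?_append_left (List.getElem?_eq_some_iff.mp hg1').1]
            exact hg1'
        · omega
        · exact le_rfl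

lemma mul_coe_mul_ne_one (x y : WithOne S) (s : S) : x * (s : WithOne S) * y ≠ 1 := by
  rcases eq_or_ne x 1 with rfl | hx
  · rcases eq_or_ne y 1 with rfl | hy
    · simpa using WithOne.coe_ne_one (a := s)
    · obtain ⟨t, rfl⟩ := WithOne.ne_one_iff_exists.mp hy
      rw [one_mul, ← WithOne.coe_mul]
      exact WithOne.coe_ne_one
  · obtain ⟨r, rfl⟩ := WithOne.ne_one_iff_exists.mp hx
    rcases eq_or_ne y 1 with rfl | hy
    · rw [mul_one, ← WithOne.coe_mul]
      exact WithOne.coe_ne_one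
    · obtain ⟨t, rfl⟩ := WithOne.ne_one_iff_exists.mp hy
      rw [← WithOne.coe_mul, ← WithOne.coe_mul]
      exact WithOne.coe_ne_one

lemma one_le_height_coe [Finite S] (s : S) : 1 ≤ height (s : WithOne S) := by
  haveI : Finite (WithOne S) := finite_withOne
  have hlt : ltJ (s : WithOne S) (1 : WithOne S) := by
    refine ⟨⟨(s : WithOne S), 1, by simp⟩, ?_⟩
    rintro ⟨x, y, hxy⟩
    exact mul_coe_mul_ne_one x y s hxy.symm
  have := height_lt_of_ltJ hlt
  omega

end MyAuxLemmas

end KRHolonomy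

open KRHolonomy in
/-- **right action.** The right action of `T¹ = KR_right(S,A)¹` on the
Chiswell tree `𝒞` given by `[k,β]·α = [k,βα]` is well defined (independent of
representatives, both of the pair `(k,β)` and of `α`), for each `α ∈ T¹` the map
`[k,β] ↦ [k,βα]` is an elliptic map of `(𝒞,[0,1])` (it preserves the depth of every vertex
and maps edges to edges), and the resulting map `ε' : T¹ → EM(𝒞,[0,1])^op` is an injective
monoid homomorphism, i.e. `α ↦ ε'_α` is an injective monoid anti-homomorphism
(`ε'_{αα'} = ε'_{α'} ∘ ε'_α` and `ε'_1 = id`). -/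
theorem holonomy_right_action {A S : Type*} [Finite A] [Semigroup S] [Finite S]
    (θ : FreeMonoid A →* WithOne S)
    (hgen : ∀ s : S, ∃ u : FreeMonoid A, θ u = (s : WithOne S))
    (hproper : ∀ u : FreeMonoid A, θ u = 1 → u = 1) :
    ∃ ε : FreeMonoid A → CVert θ → CVert θ,
      (∀ (α β : FreeMonoid A) (k : ℕ) (hk : k ≤ ell S),
          ε α (Quot.mk (simRel θ) ⟨(k, β), hk⟩) = Quot.mk (simRel θ) ⟨(k, β * α), hk⟩) ∧
      (∀ α α' : FreeMonoid A, KRrel θ α α' → ε α = ε α') ∧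
      (∀ (α : FreeMonoid A) (v : CVert θ), depth θ (ε α v) = depth θ v) ∧
      (∀ (α : FreeMonoid A) (v w : CVert θ),
          (CGraph θ).Adj v w → (CGraph θ).Adj (ε α v) (ε α w)) ∧
      (∀ α α' : FreeMonoid A, ε (α * α') = ε α' ∘ ε α) ∧
      ε 1 = id ∧
      (∀ α α' : FreeMonoid A, ε α = ε α' → KRrel θ α α') := by
  classical
  have hsur : Function.Surjective θ := by
    intro m
    by_cases hm : m = 1
    · exact ⟨1, by rw [map_one, hm]⟩
    · obtain ⟨s, rfl⟩ := WithOne.ne_one_iff_exists.mp hm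
      exact hgen s
  refine ⟨fun α => Quot.map (fun p => ⟨(p.val.1, p.val.2 * α), p.property⟩)
      (fun p q h => ⟨h.1, le_trans h.2 (lcD_mul hsur α _ _)⟩),
    ?_, ?_, ?_, ?_, ?_, ?_, ?_⟩
  · intro α β k hk
    rfl
  · -- independence of the representative of α
    intro α α' hαα'
    funext v
    induction v using Quot.ind with
    | _ p =>
      apply Quot.sound
      refine ⟨rfl, ?_⟩
      show (p.val.1 : ℕ) ≤ lcD θ (p.val.2 * α) (p.val.2 * α')
      rw [lcD_eq_of_KRrel (KRrel_mul_left p.val.2 hαα')]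
      exact p.property
  · -- depth preserving
    intro α v
    induction v using Quot.ind with
    | _ p => rfl
  · -- maps edges to edges
    intro α v w hadj
    rw [CGraph, SimpleGraph.fromRel_adj] at hadj
    refine (SimpleGraph.fromRel_adj ..).mpr ?_
    obtain ⟨hne, hrel⟩ := hadj
    have key : ∀ v w : CVert θ, edgeRel θ v w →
        edgeRel θ (Quot.map (fun p => (⟨(p.val.1, p.val.2 * α), p.property⟩ :
            {p : ℕ × FreeMonoid A // p.1 ≤ ell S}))
          (fun p q h => ⟨h.1, le_trans h.2 (lcD_mul hsur α _ _)⟩) v)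
        (Quot.map (fun p => (⟨(p.val.1, p.val.2 * α), p.property⟩ :
            {p : ℕ × FreeMonoid A // p.1 ≤ ell S}))
          (fun p q h => ⟨h.1, le_trans h.2 (lcD_mul hsur α _ _)⟩) w) := by
      rintro v w ⟨k, γ, hk, rfl, rfl⟩
      exact ⟨k, γ * α, hk, rfl, rfl⟩
    constructor
    · -- images are distinct, since depths differ
      rcases hrel with h | h <;> obtain ⟨k, γ, hk, hv, hw⟩ := h
      · intro hcontra
        rw [hv, hw] at hcontra
        have hd : (k : ℕ) = k + 1 := congrArg (depth θ) hcontra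
        omega
      · intro hcontra
        rw [hv, hw] at hcontra
        have hd : (k + 1 : ℕ) = k := congrArg (depth θ) hcontra
        omega
    · rcases hrel with h | h
      · exact Or.inl (key _ _ h)
      · exact Or.inr (key _ _ h)
  · -- anti-homomorphism
    intro α α'
    funext v
    induction v using Quot.ind with
    | _ p =>
      show Quot.mk (simRel θ) ⟨(p.val.1, p.val.2 * (α * α')), p.property⟩ =
        Quot.mk (simRel θ) ⟨(p.val.1, p.val.2 * α * α'), p.property⟩
      rw [mul_assoc]
  · -- identity
    funext v
    induction v using Quot.ind with
    | _ p =>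
      show Quot.mk (simRel θ) ⟨(p.val.1, p.val.2 * 1), p.property⟩ = Quot.mk (simRel θ) p
      rw [mul_one]
  · -- injectivity
    intro α α' hεeq
    by_cases hpos : 0 < ell S
    · have hone : (1 : FreeMonoid A) * α = α := one_mul α
      have hone' : (1 : FreeMonoid A) * α' = α' := one_mul α'
      have hv := congrFun hεeq (Quot.mk (simRel θ) ⟨(ell S, 1), le_rfl⟩)
      have hv' : Quot.mk (simRel θ) (⟨(ell S, α), le_rfl⟩ :
          {p : ℕ × FreeMonoid A // p.1 ≤ ell S}) =
          Quot.mk (simRel θ) ⟨(ell S, α'), le_rfl⟩ := by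
        rw [← hone, ← hone']
        exact hv
      have hgen2 := Quot.eqvGen_exact hv'
      -- collapse the EqvGen chain
      have key : ∀ p q : {p : ℕ × FreeMonoid A // p.1 ≤ ell S},
          Relation.EqvGen (simRel θ) p q →
          p.val.1 = q.val.1 ∧ (p.val.1 = ell S → KRrel θ p.val.2 q.val.2) := by
        intro p q h
        induction h with
        | rel x y hxy =>
          exact ⟨hxy.1, fun h1 => KRrel_of_ell_le_lcD hsur hpos (le_trans (le_of_eq h1.symm) hxy.2)⟩
        | refl x => exact ⟨rfl, fun _ => KRrel_refl _⟩
        | symm x y hxy ih =>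
          exact ⟨ih.1.symm, fun h1 => KRrel_symm (ih.2 (ih.1.symm ▸ h1))⟩
        | trans x y z hxy hyz ih1 ih2 =>
          exact ⟨ih1.1.trans ih2.1, fun h1 =>
            KRrel_trans (ih1.2 h1) (ih2.2 (ih1.1 ▸ h1))⟩
      exact (key _ _ hgen2).2 rfl
    · -- degenerate case: ell S = 0 forces A to be empty
      have hA : IsEmpty A := by
        by_contra hA
        rw [not_isEmpty_iff] at hA
        obtain ⟨a⟩ := hA
        by_cases hθa : θ (FreeMonoid.of a) = 1
        · have := hproper _ hθa
          have h2 := congrArg FreeMonoid.toList this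
          rw [FreeMonoid.toList_of, FreeMonoid.toList_one] at h2
          simp at h2
        · obtain ⟨s, hs⟩ := WithOne.ne_one_iff_exists.mp hθa
          haveI : Finite (WithOne S) := finite_withOne
          have h1 := one_le_height_coe (S := S) s
          have h2 := height_le_sSup (M := WithOne S) (s : WithOne S)
          rw [ell_eq] at hpos
          omega
      have halpha : ∀ u : FreeMonoid A, u = 1 := by
        intro u
        apply FreeMonoid.toList.injective
        rw [FreeMonoid.toList_one]
        cases hu : FreeMonoid.toList u with
        | nil => rfl
        | cons a l => exact (hA.false a).elim
      rw [halpha α, halpha α']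
      exact KRrel_refl _
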